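/- Let X^ε be an asymptotically regular continuous-time Markov chain on finite S (N ≥ 2) with irreducible skeleton chain Z, let E ⊆ S be nonempty, σ = inf{t : X^ε_t ∈ E}, τ = min{n : Z_n ∈ E}. Then for each i ∈ S and j ∈ E, lim_{ε↓0} P_i(X^ε_σ = j) = P_i(Z_τ = j). -/

import Mathlib

open Filter Topology Finset

/-- `HittingDistribution P E j h`: `h k = P_k(Z_τ = j)` where `τ` is the first hitting
time of `E` by the chain with transition matrix `P`; characterized as the minimal
nonnegative solution of the standard linear system. -/
def HittingDistribution {N : ℕ} (P : Matrix (Fin N) (Fin N) ℝ) (E : Finset (Fin N))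
    (j : Fin N) (h : Fin N → ℝ) : Prop :=
  (∀ k, 0 ≤ h k) ∧ (∀ k ∈ E, h k = if k = j then 1 else 0) ∧
  (∀ k ∉ E, h k = ∑ m, P k m * h m) ∧
  ∀ g : Fin N → ℝ, (∀ k, 0 ≤ g k) → (∀ k ∈ E, g k = if k = j then 1 else 0) →
    (∀ k ∉ E, g k = ∑ m, P k m * g m) → ∀ k, h k ≤ g k

/-- The embedded jump chain of the continuous-time chain with rates `q`. -/
noncomputable def jumpChain {N : ℕ} (q : Fin N → Fin N → ℝ) :
    Matrix (Fin N) (Fin N) ℝ :=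
  Matrix.of fun i j =>
    if i = j then 0 else q i j / ∑ j' ∈ Finset.univ.erase i, q i j'

namespace Stmt14Aux

variable {N : ℕ}

/-- restriction of a matrix to states outside `E` -/
noncomputable def subM (E : Finset (Fin N)) (Q : Matrix (Fin N) (Fin N) ℝ) :
    Matrix {k : Fin N // k ∉ E} {k : Fin N // k ∉ E} ℝ :=
  Matrix.of fun a b => Q a.1 b.1

noncomputable def subC (E : Finset (Fin N)) (j : Fin N) (Q : Matrix (Fin N) (Fin N) ℝ) :
    {k : Fin N // k ∉ E} → ℝ :=
  fun a => Q a.1 j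

/-- the candidate solution on the complement of `E` -/
noncomputable def Phi (E : Finset (Fin N)) (j : Fin N) (Q : Matrix (Fin N) (Fin N) ℝ) :
    {k : Fin N // k ∉ E} → ℝ :=
  (1 - subM E Q)⁻¹.mulVec (subC E j Q)

lemma sum_compl_eq (E : Finset (Fin N)) (f : Fin N → ℝ) :
    ∑ m ∈ Eᶜ, f m = ∑ a : {k : Fin N // k ∉ E}, f a.1 :=
  Finset.sum_subtype Eᶜ (fun _ => Finset.mem_compl) f

lemma pow_entry_nonneg {α : Type*} [Fintype α] [DecidableEq α] {M : Matrix α α ℝ}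
    (hM : ∀ a b, 0 ≤ M a b) (n : ℕ) : ∀ a b, 0 ≤ (M ^ n) a b := by
  induction n with
  | zero => intro a b; by_cases h : a = b <;> simp [pow_zero, Matrix.one_apply, h]
  | succ n ih =>
    intro a b
    rw [pow_succ, Matrix.mul_apply]
    exact Finset.sum_nonneg fun c _ => mul_nonneg (ih a c) (hM c b)

lemma fixed_pow {α : Type*} [Fintype α] [DecidableEq α] {M : Matrix α α ℝ} {v : α → ℝ}
    (hv : v = M.mulVec v) (n : ℕ) : v = (M ^ n).mulVec v := by
  induction n with
  | zero => simp [pow_zero]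
  | succ n ih =>
    rw [pow_succ, ← Matrix.mulVec_mulVec, ← hv]; exact ih

/-- If some power of the nonnegative matrix `M` has all row sums `< 1` then `1 - M`
is invertible. -/
lemma isUnit_one_sub {α : Type*} [Fintype α] [DecidableEq α] {M : Matrix α α ℝ}
    (hM : ∀ a b, 0 ≤ M a b) (n : ℕ) (hn : ∀ a, ∑ b, (M ^ n) a b < 1) :
    IsUnit (1 - M).det := by
  rw [isUnit_iff_ne_zero]
  intro hdet
  obtain ⟨v, hv0, hv⟩ := (Matrix.exists_mulVec_eq_zero_iff).2 hdet
  have hvM : v = M.mulVec v := by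
    have := congrFun hv
    funext a
    have h := this a
    simp [Matrix.sub_mulVec, Matrix.one_mulVec, Pi.zero_apply, sub_eq_zero] at h
    exact h
  have hvn : v = (M ^ n).mulVec v := fixed_pow hvM n
  -- pick a maximizing |v|
  by_cases hα : Nonempty α
  · obtain ⟨a, _, ha⟩ := Finset.exists_max_image (Finset.univ : Finset α)
      (fun b => |v b|) (Finset.univ_nonempty)
    set c := |v a| with hc
    have hcpos : 0 < c := by
      rcases lt_or_eq_of_le (abs_nonneg (v a)) with h | h
      · exact h
      · exfalso; apply hv0; funext b
        have : |v b| ≤ 0 := by rw [h]; exact ha b (Finset.mem_univ b)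
        have := le_antisymm this (abs_nonneg _)
        simpa [abs_eq_zero] using this
    have hle : c ≤ (∑ b, (M ^ n) a b) * c := by
      calc c = |((M ^ n).mulVec v) a| := by rw [← hvn]
        _ = |∑ b, (M ^ n) a b * v b| := by rw [Matrix.mulVec, dotProduct]
        _ ≤ ∑ b, |(M ^ n) a b * v b| := Finset.abs_sum_le_sum_abs _ _
        _ ≤ ∑ b, (M ^ n) a b * c := by
            refine Finset.sum_le_sum fun b _ => ?_
            rw [abs_mul, abs_of_nonneg (pow_entry_nonneg hM n a b)]
            exact mul_le_mul_of_nonneg_left (ha b (Finset.mem_univ b))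
              (pow_entry_nonneg hM n a b)
        _ = (∑ b, (M ^ n) a b) * c := by rw [Finset.sum_mul]
    have : c < c := lt_of_le_of_lt hle (by
      calc (∑ b, (M ^ n) a b) * c < 1 * c :=
        (mul_lt_mul_of_pos_right (hn a) hcpos)
      _ = c := one_mul c)
    exact lt_irrefl c this
  · exact hv0 (funext fun b => absurd ⟨b⟩ hα)

/-- uniqueness of the solution given invertibility -/
lemma sol_eq_Phi (E : Finset (Fin N)) (j : Fin N) (hj : j ∈ E)
    (Q : Matrix (Fin N) (Fin N) ℝ) (hdet : IsUnit (1 - subM E Q).det)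
    (h : Fin N → ℝ) (hE : ∀ k ∈ E, h k = if k = j then 1 else 0)
    (heq : ∀ k ∉ E, h k = ∑ m, Q k m * h m) :
    ∀ a : {k : Fin N // k ∉ E}, h a.1 = Phi E j Q a := by
  set u : {k : Fin N // k ∉ E} → ℝ := fun a => h a.1 with hu
  have key : (1 - subM E Q).mulVec u = subC E j Q := by
    funext a
    have hsplit : ∑ m, Q a.1 m * h m = Q a.1 j + ∑ b : {k : Fin N // k ∉ E}, Q a.1 b.1 * h b.1 := by
      rw [← Finset.sum_add_sum_compl E, ← sum_compl_eq E (fun m => Q a.1 m * h m)]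
      congr 1
      rw [Finset.sum_eq_single j]
      · rw [hE j hj]; simp
      · intro b hb hbj; rw [hE b hb, if_neg hbj, mul_zero]
      · intro hjE; exact absurd hj hjE
    have := heq a.1 a.2
    rw [hsplit] at this
    simp only [Matrix.sub_mulVec, Matrix.one_mulVec, Pi.sub_apply]
    have hMu : (subM E Q).mulVec u a = ∑ b : {k : Fin N // k ∉ E}, Q a.1 b.1 * h b.1 := by
      rw [Matrix.mulVec, dotProduct]; rfl
    rw [hMu]
    show u a - _ = subC E j Q a
    rw [hu]
    simp only
    rw [this, subC]
    ring
  intro a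
  have hP : Phi E j Q = u := by
    rw [Phi, ← key, Matrix.mulVec_mulVec, Matrix.nonsing_inv_mul _ hdet, Matrix.one_mulVec]
  rw [hP]

end Stmt14Aux

namespace Stmt14Aux

lemma rowsum_mul {α : Type*} [Fintype α] [DecidableEq α] (M M' : Matrix α α ℝ) (a : α) :
    ∑ b, (M * M') a b = ∑ c, M a c * ∑ b, M' c b := by
  simp_rw [Matrix.mul_apply, Finset.mul_sum]
  exact Finset.sum_comm

lemma Phi_continuousAt (E : Finset (Fin N)) (j : Fin N) (Q₀ : Matrix (Fin N) (Fin N) ℝ)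
    (hdet : IsUnit (1 - subM E Q₀).det) : ContinuousAt (Phi E j) Q₀ := by
  have hsubM : Continuous (fun Q : Matrix (Fin N) (Fin N) ℝ => subM E Q) := by
    apply continuous_matrix
    intro a b
    exact ((continuous_apply b.1).comp (continuous_apply a.1))
  have hone : Continuous (fun Q : Matrix (Fin N) (Fin N) ℝ => 1 - subM E Q) :=
    continuous_const.sub hsubM
  have hinv : ContinuousAt (fun Q : Matrix (Fin N) (Fin N) ℝ => (1 - subM E Q)⁻¹) Q₀ := by
    apply ContinuousAt.comp _ hone.continuousAt
    apply continuousAt_matrix_inv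
    have : (Ring.inverse : ℝ → ℝ) = Inv.inv := by
      funext x; exact Ring.inverse_eq_inv x
    rw [this]
    exact continuousAt_inv₀ (isUnit_iff_ne_zero.mp hdet)
  have hsubC : Continuous (fun Q : Matrix (Fin N) (Fin N) ℝ => subC E j Q) := by
    apply continuous_pi
    intro a
    exact ((continuous_apply j).comp (continuous_apply a.1))
  unfold Phi
  rw [continuousAt_pi]
  intro a
  have : ∀ Q : Matrix (Fin N) (Fin N) ℝ,
      ((1 - subM E Q)⁻¹).mulVec (subC E j Q) a
        = ∑ b, (1 - subM E Q)⁻¹ a b * subC E j Q b := by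
    intro Q; rw [Matrix.mulVec, dotProduct]
  simp only [this]
  apply tendsto_finset_sum
  intro b _
  exact (((continuousAt_pi.mp (continuousAt_pi.mp hinv a)) b)).mul
    ((continuousAt_pi.mp hsubC.continuousAt) b)

variable (E : Finset (Fin N)) (j : Fin N)

lemma subM_nonneg {Q : Matrix (Fin N) (Fin N) ℝ} (hnn : ∀ i m, 0 ≤ Q i m) :
    ∀ a b, 0 ≤ subM E Q a b := fun a b => hnn a.1 b.1

lemma subM_rowsum_lt {Q : Matrix (Fin N) (Fin N) ℝ} (hj : j ∈ E)
    (hnn : ∀ i m, 0 ≤ Q i m) (hrow : ∀ i, ∑ m, Q i m ≤ 1)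
    (a : {k : Fin N // k ∉ E}) (hja : 0 < Q a.1 j) :
    ∑ b, subM E Q a b < 1 := by
  have h1 : ∑ b, subM E Q a b = ∑ m ∈ Eᶜ, Q a.1 m :=
    (sum_compl_eq E (fun m => Q a.1 m)).symm
  have h2 : Eᶜ ⊆ Finset.univ.erase j := by
    intro m hm
    rw [Finset.mem_compl] at hm
    exact Finset.mem_erase.mpr ⟨fun hmj => hm (hmj ▸ hj), Finset.mem_univ m⟩
  have h3 : ∑ m ∈ Eᶜ, Q a.1 m ≤ ∑ m ∈ Finset.univ.erase j, Q a.1 m :=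
    Finset.sum_le_sum_of_subset_of_nonneg h2 (fun m _ _ => hnn a.1 m)
  have h4 : ∑ m ∈ Finset.univ.erase j, Q a.1 m = (∑ m, Q a.1 m) - Q a.1 j :=
    Finset.sum_erase_eq_sub (Finset.mem_univ j)
  calc ∑ b, subM E Q a b ≤ (∑ m, Q a.1 m) - Q a.1 j := by rw [h1, ← h4]; exact h3
    _ ≤ 1 - Q a.1 j := by linarith [hrow a.1]
    _ < 1 := by linarith

/-- invertibility when every row escapes to `j ∈ E` in one step -/
lemma isUnit_one_step {Q : Matrix (Fin N) (Fin N) ℝ} (hj : j ∈ E)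
    (hnn : ∀ i m, 0 ≤ Q i m) (hrow : ∀ i, ∑ m, Q i m ≤ 1)
    (hja : ∀ a : Fin N, a ∉ E → 0 < Q a j) :
    IsUnit (1 - subM E Q).det := by
  apply isUnit_one_sub (subM_nonneg E hnn) 1
  intro a
  rw [pow_one]
  exact subM_rowsum_lt E j hj hnn hrow a (hja a.1 a.2)

/-- the key estimate: if `(Q^n) a j > 0` then the `n`-step sub-row-sum at `a` is `< 1`. -/
lemma rowsum_pow_le {Q : Matrix (Fin N) (Fin N) ℝ} (hj : j ∈ E)
    (hnn : ∀ i m, 0 ≤ Q i m) (hrow : ∀ i, ∑ m, Q i m ≤ 1) :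
    ∀ n, ∀ a : {k : Fin N // k ∉ E},
      (∑ b, ((subM E Q) ^ n) a b ≤ 1) ∧
      (0 < (Q ^ n) a.1 j → ∑ b, ((subM E Q) ^ n) a b < 1) := by
  intro n
  induction n with
  | zero =>
    intro a
    constructor
    · simp [pow_zero, Matrix.one_apply]
    · intro hpos
      exfalso
      have : ((Q ^ 0) a.1 j) = 0 := by
        rw [pow_zero, Matrix.one_apply, if_neg]
        intro hq; exact a.2 (hq ▸ hj)
      rw [this] at hpos; exact lt_irrefl 0 hpos
  | succ n ih =>
    intro a
    set M := subM E Q with hM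
    have hrs : ∑ b, (M ^ (n+1)) a b = ∑ c, M a c * ∑ b, (M ^ n) c b := by
      rw [pow_succ']
      exact rowsum_mul M (M ^ n) a
    have hsub1 : ∑ c, M a c ≤ 1 := by
      have h1 : ∑ c, M a c = ∑ m ∈ Eᶜ, Q a.1 m :=
        (sum_compl_eq E (fun m => Q a.1 m)).symm
      have h3 : ∑ m ∈ Eᶜ, Q a.1 m ≤ ∑ m, Q a.1 m :=
        Finset.sum_le_sum_of_subset_of_nonneg (Finset.subset_univ _) (fun m _ _ => hnn a.1 m)
      rw [h1]; exact le_trans h3 (hrow a.1)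
    have hle : ∑ b, (M ^ (n+1)) a b ≤ ∑ c, M a c := by
      rw [hrs]
      calc ∑ c, M a c * ∑ b, (M ^ n) c b ≤ ∑ c, M a c * 1 :=
        Finset.sum_le_sum fun c _ =>
          mul_le_mul_of_nonneg_left (ih c).1 (subM_nonneg E hnn a c)
      _ = ∑ c, M a c := by simp
    refine ⟨le_trans hle hsub1, ?_⟩
    intro hpos
    -- find an intermediate state
    have hstep : ∃ m, 0 < Q a.1 m * (Q ^ n) m j := by
      rw [pow_succ'] at hpos
      rw [Matrix.mul_apply] at hpos
      by_contra hcon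
      push_neg at hcon
      have : ∑ m, Q a.1 m * (Q ^ n) m j ≤ 0 := Finset.sum_nonpos fun m _ => hcon m
      linarith
    obtain ⟨m, hm⟩ := hstep
    have hQam : 0 < Q a.1 m := by
      rcases lt_or_ge 0 (Q a.1 m) with h | h
      · exact h
      · exfalso
        have := mul_nonpos_of_nonpos_of_nonneg h (pow_entry_nonneg (fun i k => hnn i k) n m j)
        linarith
    have hQnm : 0 < (Q ^ n) m j := by
      rcases lt_or_ge 0 ((Q ^ n) m j) with h | h
      · exact h
      · exfalso
        have := mul_nonpos_of_nonneg_of_nonpos (le_of_lt hQam) h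
        linarith
    by_cases hmE : m ∈ E
    · -- escapes directly into E
      have h1 : ∑ c, M a c = ∑ m' ∈ Eᶜ, Q a.1 m' :=
        (sum_compl_eq E (fun m' => Q a.1 m')).symm
      have h2 : Eᶜ ⊆ Finset.univ.erase m := by
        intro m' hm'
        rw [Finset.mem_compl] at hm'
        exact Finset.mem_erase.mpr ⟨fun h => hm' (h ▸ hmE), Finset.mem_univ m'⟩
      have h3 : ∑ m' ∈ Eᶜ, Q a.1 m' ≤ ∑ m' ∈ Finset.univ.erase m, Q a.1 m' :=
        Finset.sum_le_sum_of_subset_of_nonneg h2 (fun m' _ _ => hnn a.1 m')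
      have h4 : ∑ m' ∈ Finset.univ.erase m, Q a.1 m' = (∑ m', Q a.1 m') - Q a.1 m :=
        Finset.sum_erase_eq_sub (Finset.mem_univ m)
      have hlt : ∑ c, M a c < 1 := by
        rw [h1]
        calc ∑ m' ∈ Eᶜ, Q a.1 m' ≤ (∑ m', Q a.1 m') - Q a.1 m := by rw [← h4]; exact h3
        _ ≤ 1 - Q a.1 m := by linarith [hrow a.1]
        _ < 1 := by linarith
      exact lt_of_le_of_lt hle hlt
    · -- goes through b₀ ∉ E, use IH strict bound there
      set b₀ : {k : Fin N // k ∉ E} := ⟨m, hmE⟩ with hb₀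
      have hstrict : ∑ c, M a c * ∑ b, (M ^ n) c b < ∑ c, M a c := by
        have := Finset.sum_lt_sum
          (fun c (_ : c ∈ Finset.univ) =>
            (by
              calc M a c * ∑ b, (M ^ n) c b ≤ M a c * 1 :=
                mul_le_mul_of_nonneg_left (ih c).1 (subM_nonneg E hnn a c)
              _ = M a c := mul_one _ : M a c * ∑ b, (M ^ n) c b ≤ M a c))
          ⟨b₀, Finset.mem_univ b₀, by
            calc M a b₀ * ∑ b, (M ^ n) b₀ b < M a b₀ * 1 :=
              mul_lt_mul_of_pos_left ((ih b₀).2 hQnm) hQam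
            _ = M a b₀ := mul_one _⟩
        exact this
      rw [hrs]
      exact lt_of_lt_of_le hstrict hsub1

lemma rowsum_pow_antitone {Q : Matrix (Fin N) (Fin N) ℝ} (hj : j ∈ E)
    (hnn : ∀ i m, 0 ≤ Q i m) (hrow : ∀ i, ∑ m, Q i m ≤ 1) :
    ∀ n, ∀ a : {k : Fin N // k ∉ E},
      ∑ b, ((subM E Q) ^ (n+1)) a b ≤ ∑ b, ((subM E Q) ^ n) a b := by
  intro n
  induction n with
  | zero =>
    intro a
    have h := (rowsum_pow_le E j hj hnn hrow 1 a).1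
    simpa [pow_zero, Matrix.one_apply] using h
  | succ n ih =>
    intro a
    set M := subM E Q with hM
    rw [show ((n:ℕ)+1+1) = n+2 from rfl]
    have e1 : ∑ b, (M ^ (n+2)) a b = ∑ c, M a c * ∑ b, (M ^ (n+1)) c b := by
      rw [pow_succ']; exact rowsum_mul M (M ^ (n+1)) a
    have e2 : ∑ b, (M ^ (n+1)) a b = ∑ c, M a c * ∑ b, (M ^ n) c b := by
      rw [pow_succ']; exact rowsum_mul M (M ^ n) a
    rw [e1, e2]
    exact Finset.sum_le_sum fun c _ =>
      mul_le_mul_of_nonneg_left (ih c) (subM_nonneg E hnn a c)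

/-- invertibility of `1 - subM E Q` from irreducibility towards `j ∈ E`. -/
lemma isUnit_of_reachable {Q : Matrix (Fin N) (Fin N) ℝ} (hj : j ∈ E)
    (hnn : ∀ i m, 0 ≤ Q i m) (hrow : ∀ i, ∑ m, Q i m ≤ 1)
    (hirr : ∀ a : Fin N, ∃ n, 0 < (Q ^ n) a j) :
    IsUnit (1 - subM E Q).det := by
  choose f hf using fun a : {k : Fin N // k ∉ E} => hirr a.1
  set n₀ := Finset.univ.sup f with hn₀
  apply isUnit_one_sub (subM_nonneg E hnn) n₀
  intro a
  have hfa : f a ≤ n₀ := Finset.le_sup (Finset.mem_univ a)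
  have hanti : ∀ k, ∑ b, ((subM E Q) ^ (f a + k)) a b ≤ ∑ b, ((subM E Q) ^ (f a)) a b := by
    intro k
    induction k with
    | zero => simp
    | succ k ih =>
      calc ∑ b, ((subM E Q) ^ (f a + (k+1))) a b ≤ ∑ b, ((subM E Q) ^ (f a + k)) a b := by
            rw [show f a + (k+1) = (f a + k) + 1 by ring]
            exact rowsum_pow_antitone E j hj hnn hrow (f a + k) a
        _ ≤ _ := ih
  obtain ⟨k, hk⟩ : ∃ k, n₀ = f a + k := ⟨n₀ - f a, by omega⟩
  calc ∑ b, ((subM E Q) ^ n₀) a b ≤ ∑ b, ((subM E Q) ^ (f a)) a b := by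
        rw [hk]; exact hanti k
    _ < 1 := (rowsum_pow_le E j hj hnn hrow (f a) a).2 (hf a)

end Stmt14Aux


open Stmt14Aux in
/-- For an asymptotically regular family `X^ε` with irreducible skeleton chain `Z`, a
nonempty set `E` and `j ∈ E`, the distribution at the first hitting time `σ` of `E`
(i.e., the hitting distribution of the embedded jump chain) converges:
`P_i(X^ε_σ = j) → P_i(Z_τ = j)` as `ε ↓ 0`. -/
theorem stmt14 (N : ℕ) (hN : 2 ≤ N) (q : ℝ → Fin N → Fin N → ℝ)
    (hpos : ∀ ε > (0:ℝ), ∀ i j, i ≠ j → 0 < q ε i j)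
    (hAR : ∀ i j k l : Fin N, i ≠ j → k ≠ l → ∃ L : ENNReal,
      Tendsto (fun ε => ENNReal.ofReal (q ε i j / q ε k l)) (𝓝[>] (0:ℝ)) (𝓝 L))
    (P : Matrix (Fin N) (Fin N) ℝ) (hPdiag : ∀ i, P i i = 0)
    (hP : ∀ i j : Fin N, i ≠ j → Tendsto
      (fun ε => q ε i j / ∑ j' ∈ Finset.univ.erase i, q ε i j')
      (𝓝[>] (0:ℝ)) (𝓝 (P i j)))
    (hirr : ∀ i j : Fin N, ∃ n : ℕ, 0 < (P ^ n) i j)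
    (E : Finset (Fin N)) (hE : E.Nonempty) (j : Fin N) (hj : j ∈ E)
    (h : ℝ → Fin N → ℝ) (h₀ : Fin N → ℝ)
    -- `h ε i = P_i(X^ε_σ = j)`, the hitting distribution of the jump chain of `X^ε`:
    (hhE : ∀ ε > (0:ℝ), HittingDistribution (jumpChain (q ε)) E j (h ε))
    -- `h₀ i = P_i(Z_τ = j)` for the skeleton chain `Z`:
    (hh₀ : HittingDistribution P E j h₀) :
    ∀ i, Tendsto (fun ε => h ε i) (𝓝[>] (0:ℝ)) (𝓝 (h₀ i)) := by
  -- basic facts about the jump chain for ε > 0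
  have herase : ∀ i : Fin N, (Finset.univ.erase i).Nonempty := by
    intro i
    rw [← Finset.card_pos, Finset.card_erase_of_mem (Finset.mem_univ i), Finset.card_univ,
      Fintype.card_fin]
    omega
  have hSpos : ∀ ε > (0:ℝ), ∀ i : Fin N, 0 < ∑ j' ∈ Finset.univ.erase i, q ε i j' := by
    intro ε hε i
    exact Finset.sum_pos (fun m hm => hpos ε hε i m (Ne.symm (Finset.mem_erase.mp hm).1))
      (herase i)
  have hQnn : ∀ ε > (0:ℝ), ∀ i m, 0 ≤ jumpChain (q ε) i m := by
    intro ε hε i m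
    by_cases him : i = m
    · simp [jumpChain, him]
    · rw [jumpChain, Matrix.of_apply, if_neg him]
      exact le_of_lt (div_pos (hpos ε hε i m him) (hSpos ε hε i))
  have hQrow : ∀ ε > (0:ℝ), ∀ i, ∑ m, jumpChain (q ε) i m = 1 := by
    intro ε hε i
    rw [← Finset.add_sum_erase Finset.univ _ (Finset.mem_univ i)]
    have hd : jumpChain (q ε) i i = 0 := by simp [jumpChain]
    rw [hd, zero_add]
    have : ∀ m ∈ Finset.univ.erase i, jumpChain (q ε) i m
        = q ε i m / ∑ j' ∈ Finset.univ.erase i, q ε i j' := by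
      intro m hm
      rw [jumpChain, Matrix.of_apply, if_neg (Ne.symm (Finset.mem_erase.mp hm).1)]
    rw [Finset.sum_congr rfl this, ← Finset.sum_div]
    exact div_self (ne_of_gt (hSpos ε hε i))
  have hQj : ∀ ε > (0:ℝ), ∀ a : Fin N, a ∉ E → 0 < jumpChain (q ε) a j := by
    intro ε hε a haE
    have haj : a ≠ j := fun hq => haE (hq ▸ hj)
    rw [jumpChain, Matrix.of_apply, if_neg haj]
    exact div_pos (hpos ε hε a j haj) (hSpos ε hε a)
  -- invertibility for ε > 0
  have hdetQ : ∀ ε > (0:ℝ), IsUnit (1 - subM E (jumpChain (q ε))).det := by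
    intro ε hε
    exact isUnit_one_step E j hj (hQnn ε hε) (fun i => le_of_eq (hQrow ε hε i)) (hQj ε hε)
  -- facts about P
  have hPnn : ∀ i m : Fin N, 0 ≤ P i m := by
    intro i m
    by_cases him : i = m
    · rw [him] at *; rw [hPdiag m]
    · refine ge_of_tendsto (hP i m him) ?_
      refine Filter.eventually_of_mem self_mem_nhdsWithin fun ε hε => ?_
      exact le_of_lt (div_pos (hpos ε hε i m him) (hSpos ε hε i))
  have hProw : ∀ i, ∑ m, P i m = 1 := by
    intro i
    have ht : Tendsto (fun ε => ∑ m ∈ Finset.univ.erase i,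
        q ε i m / ∑ j' ∈ Finset.univ.erase i, q ε i j') (𝓝[>] (0:ℝ))
        (𝓝 (∑ m ∈ Finset.univ.erase i, P i m)) := by
      apply tendsto_finset_sum
      intro m hm
      exact hP i m (Ne.symm (Finset.mem_erase.mp hm).1)
    have heq : (fun ε => ∑ m ∈ Finset.univ.erase i,
        q ε i m / ∑ j' ∈ Finset.univ.erase i, q ε i j')
        =ᶠ[𝓝[>] (0:ℝ)] (fun _ => (1:ℝ)) := by
      refine Filter.eventuallyEq_of_mem self_mem_nhdsWithin fun ε hε => ?_
      rw [← Finset.sum_div]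
      exact div_self (ne_of_gt (hSpos ε hε i))
    have h1 : Tendsto (fun _ : ℝ => (1:ℝ)) (𝓝[>] (0:ℝ)) (𝓝 (∑ m ∈ Finset.univ.erase i, P i m)) :=
      ht.congr' heq
    have := tendsto_nhds_unique h1 tendsto_const_nhds
    rw [← Finset.add_sum_erase Finset.univ _ (Finset.mem_univ i), hPdiag i, zero_add, this]
  have hdetP : IsUnit (1 - subM E P).det :=
    isUnit_of_reachable E j hj hPnn (fun i => le_of_eq (hProw i)) (fun a => hirr a j)
  -- convergence of the jump chain to P
  have hjc : Tendsto (fun ε => jumpChain (q ε)) (𝓝[>] (0:ℝ)) (𝓝 P) := by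
    apply tendsto_pi_nhds.mpr
    intro i
    rw [tendsto_pi_nhds]
    intro m
    by_cases him : i = m
    · subst him
      have : ∀ ε : ℝ, jumpChain (q ε) i i = 0 := fun ε => by simp [jumpChain]
      simp only [this, hPdiag i]
      exact tendsto_const_nhds
    · have : ∀ ε : ℝ, jumpChain (q ε) i m
          = q ε i m / ∑ j' ∈ Finset.univ.erase i, q ε i j' := fun ε => by
        rw [jumpChain, Matrix.of_apply, if_neg him]
      simp only [this]
      exact hP i m him
  -- main claim
  intro i
  by_cases hiE : i ∈ E
  · have h0 : h₀ i = if i = j then 1 else 0 := hh₀.2.1 i hiE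
    have hconst : (fun ε => h ε i) =ᶠ[𝓝[>] (0:ℝ)] (fun _ => if i = j then (1:ℝ) else 0) :=
      Filter.eventuallyEq_of_mem self_mem_nhdsWithin fun ε hε => (hhE ε hε).2.1 i hiE
    rw [h0]
    exact Tendsto.congr' hconst.symm tendsto_const_nhds
  · set a : {k : Fin N // k ∉ E} := ⟨i, hiE⟩ with ha
    have h0 : h₀ i = Phi E j P a :=
      sol_eq_Phi E j hj P hdetP h₀ hh₀.2.1 hh₀.2.2.1 a
    have hev : (fun ε => h ε i) =ᶠ[𝓝[>] (0:ℝ)] (fun ε => Phi E j (jumpChain (q ε)) a) := by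
      refine Filter.eventuallyEq_of_mem self_mem_nhdsWithin fun ε hε => ?_
      exact sol_eq_Phi E j hj (jumpChain (q ε)) (hdetQ ε hε) (h ε)
        (hhE ε hε).2.1 (hhE ε hε).2.2.1 a
    have hten : Tendsto (fun ε => Phi E j (jumpChain (q ε))) (𝓝[>] (0:ℝ))
        (𝓝 (Phi E j P)) :=
      (Phi_continuousAt E j P hdetP).tendsto.comp hjc
    have htena : Tendsto (fun ε => Phi E j (jumpChain (q ε)) a) (𝓝[>] (0:ℝ))
        (𝓝 (Phi E j P a)) := (tendsto_pi_nhds.mp hten) a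
    rw [h0]
    exact Tendsto.congr' hev.symm htena
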